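/- Neighboring safe states of the TA-SCL Markov chain are mutually accessible: if s is a safe state (i.e., β_d < s ≤ β_n·ζ + β_d) and s + 1 is also a safe state (i.e., s + 1 ≤ β_n·ζ + β_d), then there exist integers k ≥ 1 and k' ≥ 1 such that the (s, s+1) entry of P^k and the (s+1, s) entry of P^{k'} are both strictly positive. -/

import Mathlib

/-- Transition matrix of the TA-SCL Markov chain with parameters `βn`, `βd`
(speed gain `βn/βd`), buffer size `ζ`, and small-decoder block error rate `ε`.
States are `0, 1, …, S` where `S = βn*ζ + βn`. -/
def tasclP (βn βd ζ : ℕ) (ε : ℝ) :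
    Matrix (Fin (βn * ζ + βn + 1)) (Fin (βn * ζ + βn + 1)) ℝ :=
  fun s j =>
    if (s : ℕ) ≤ βd then
      -- idle state: goes to 0 with prob 1-ε, to βn with prob ε
      (if (j : ℕ) = 0 then 1 - ε else 0) + (if (j : ℕ) = βn then ε else 0)
    else if (s : ℕ) ≤ βn * ζ + βd then
      -- safe state: goes to s-βd with prob 1-ε, to s+βn-βd with prob ε
      (if (j : ℕ) = (s : ℕ) - βd then 1 - ε else 0) +
        (if (j : ℕ) = (s : ℕ) + βn - βd then ε else 0)
    else
      -- hazard state: goes to s-βd with prob 1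
      if (j : ℕ) = (s : ℕ) - βd then 1 else 0

section helpers

variable {βn βd ζ : ℕ} {ε : ℝ}

lemma tasclP_nonneg (hε0 : 0 < ε) (hε1 : ε < 1) (i j : Fin (βn * ζ + βn + 1)) :
    0 ≤ tasclP βn βd ζ ε i j := by
  unfold tasclP
  split_ifs <;> norm_num <;> linarith

lemma tasclP_pow_nonneg (hε0 : 0 < ε) (hε1 : ε < 1) (k : ℕ)
    (i j : Fin (βn * ζ + βn + 1)) : 0 ≤ (tasclP βn βd ζ ε ^ k) i j := by
  induction k generalizing i j with
  | zero =>
      simp only [pow_zero, Matrix.one_apply]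
      split <;> norm_num
  | succ n ih =>
      rw [pow_succ, Matrix.mul_apply]
      exact Finset.sum_nonneg fun m _ => mul_nonneg (ih i m) (tasclP_nonneg hε0 hε1 m j)

lemma tasclP_prepend (hε0 : 0 < ε) (hε1 : ε < 1) {k : ℕ}
    {i j l : Fin (βn * ζ + βn + 1)}
    (h1 : 0 < tasclP βn βd ζ ε i j) (h2 : 0 < (tasclP βn βd ζ ε ^ k) j l) :
    0 < (tasclP βn βd ζ ε ^ (k + 1)) i l := by
  rw [pow_succ', Matrix.mul_apply]
  refine lt_of_lt_of_le (mul_pos h1 h2) ?_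
  exact Finset.single_le_sum
    (fun m _ => mul_nonneg (tasclP_nonneg hε0 hε1 i m) (tasclP_pow_nonneg hε0 hε1 k m l))
    (Finset.mem_univ j)

lemma tasclP_step_down (hβd : 0 < βd) (hβ : βd < βn) (hε0 : 0 < ε) (hε1 : ε < 1)
    {x : ℕ} (hx1 : βd < x) (hx2 : x ≤ βn * ζ + βd)
    (hxS : x < βn * ζ + βn + 1) (hyS : x - βd < βn * ζ + βn + 1) :
    0 < tasclP βn βd ζ ε ⟨x, hxS⟩ ⟨x - βd, hyS⟩ := by
  unfold tasclP
  simp only [Fin.val_mk]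
  rw [if_neg (by omega), if_pos hx2, if_neg (by omega : ¬(x - βd = x + βn - βd))]
  norm_num
  linarith

lemma tasclP_step_up (hβd : 0 < βd) (hβ : βd < βn) (hε0 : 0 < ε) (hε1 : ε < 1)
    {x : ℕ} (hx1 : βd < x) (hx2 : x ≤ βn * ζ + βd)
    (hxS : x < βn * ζ + βn + 1) (hyS : x + βn - βd < βn * ζ + βn + 1) :
    0 < tasclP βn βd ζ ε ⟨x, hxS⟩ ⟨x + βn - βd, hyS⟩ := by
  unfold tasclP
  simp only [Fin.val_mk]
  rw [if_neg (by omega), if_pos hx2, if_neg (by omega : ¬(x + βn - βd = x - βd))]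
  norm_num
  linarith

end helpers

section climb

variable {βn βd ζ : ℕ} {ε : ℝ}

/-- Greedy scheduling: from a safe state `x`, performing `u` up-moves and `d`
down-moves (in a suitable order) reaches `y` with positive probability,
provided `y` is safe and the bookkeeping equation holds. -/
lemma tasclP_climb (hβd : 0 < βd) (hβ : βd < βn) (hζ : 0 < ζ)
    (hε0 : 0 < ε) (hε1 : ε < 1) :
    ∀ n u d x y, u + d = n + 1 →
      βd < x → x ≤ βn * ζ + βd → βd < y → y ≤ βn * ζ + βd →
      y + (u + d) * βd = x + u * βn →
      ∀ (hxS : x < βn * ζ + βn + 1) (hyS : y < βn * ζ + βn + 1),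
      0 < (tasclP βn βd ζ ε ^ (n + 1)) ⟨x, hxS⟩ ⟨y, hyS⟩ := by
  intro n
  induction n with
  | zero =>
      intro u d x y hud hx1 hx2 hy1 hy2 heq hxS hyS
      rw [pow_one]
      have hu01 : u = 0 ∨ u = 1 := by omega
      rcases hu01 with rfl | rfl
      · -- u = 0, d = 1 : one down-move
        have hd1 : d = 1 := by omega
        subst hd1
        have hy : y = x - βd := by simp at heq; omega
        subst hy
        exact tasclP_step_down hβd hβ hε0 hε1 hx1 hx2 hxS hyS
      · -- u = 1, d = 0 : one up-move
        have hd0 : d = 0 := by omega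
        subst hd0
        have hy : y = x + βn - βd := by simp at heq; omega
        subst hy
        exact tasclP_step_up hβd hβ hε0 hε1 hx1 hx2 hxS hyS
  | succ n ih =>
      intro u d x y hud hx1 hx2 hy1 hy2 heq hxS hyS
      match u with
      | 0 =>
          -- all remaining moves are down-moves
          have hd : d = n + 2 := by omega
          subst hd
          have hsplit : (0 + (n + 2)) * βd = (0 + (n + 1)) * βd + βd := by ring
          have hx' : x - βd < βn * ζ + βn + 1 := by omega
          refine tasclP_prepend hε0 hε1
            (tasclP_step_down hβd hβ hε0 hε1 hx1 hx2 hxS hx') ?_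
          have h0 : (0 : ℕ) * βn = 0 := by ring
          refine ih 0 (n + 1) (x - βd) y (by omega) (by omega) (by omega) hy1 hy2 (by omega) hx' hyS
      | v + 1 =>
          have hsplit1 : (v + 1 + d) * βd = (v + d) * βd + βd := by ring
          have hsplit2 : (v + 1) * βn = v * βn + βn := by ring
          by_cases hW : x + βn ≤ βn * ζ + 2 * βd
          · -- up-move first
            have hx' : x + βn - βd < βn * ζ + βn + 1 := by omega
            refine tasclP_prepend hε0 hε1
              (tasclP_step_up hβd hβ hε0 hε1 hx1 hx2 hxS hx') ?_
            refine ih v d (x + βn - βd) y (by omega) (by omega) (by omega) hy1 hy2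
              (by omega) hx' hyS
          · -- down-move first; first show some down-move remains
            have hd1 : 1 ≤ d := by
              by_contra hd0
              have hd0' : d = 0 := by omega
              subst hd0'
              have h1 : (v + 1) * βd ≤ (v + 1) * βn := Nat.mul_le_mul_left _ (le_of_lt hβ)
              have h2 : βn - βd ≤ (v + 1) * (βn - βd) := Nat.le_mul_of_pos_left _ (by omega)
              have h3 : (v + 1) * βd + (v + 1) * (βn - βd) = (v + 1) * βn := by
                rw [← Nat.mul_add]
                congr 1
                omega
              have h4 : (v + 1 + 0) * βd = (v + 1) * βd := by ring
              omega
            have hζ' : βn ≤ βn * ζ := Nat.le_mul_of_pos_right _ hζ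
            have hx' : x - βd < βn * ζ + βn + 1 := by omega
            obtain ⟨e, rfl⟩ : ∃ e, d = e + 1 := ⟨d - 1, by omega⟩
            have hsplit3 : (v + 1 + (e + 1)) * βd = (v + 1 + e) * βd + βd := by ring
            refine tasclP_prepend hε0 hε1
              (tasclP_step_down hβd hβ hε0 hε1 hx1 hx2 hxS hx') ?_
            refine ih (v + 1) e (x - βd) y (by omega) (by omega) (by omega) hy1 hy2
              (by omega) hx' hyS

end climb

/-- A Bézout-type lemma: if `m` and `n` are coprime and positive then some
positive multiple of `m` is one more than a multiple of `n`. -/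
lemma exists_mul_eq_mul_add_one {m n : ℕ} (hm : 0 < m) (hn : 0 < n)
    (hcop : Nat.Coprime m n) : ∃ a b : ℕ, 1 ≤ a ∧ a * m = b * n + 1 := by
  rcases eq_or_lt_of_le (show 1 ≤ n from hn) with h1 | h2
  · subst h1
    exact ⟨1, m - 1, le_refl 1, by omega⟩
  · -- n ≥ 2 : use Euler's theorem
    have htot : 1 ≤ Nat.totient n := Nat.totient_pos.2 hn
    have heuler : m ^ Nat.totient n ≡ 1 [MOD n] := Nat.ModEq.pow_totient hcop
    have hmod : m ^ Nat.totient n % n = 1 := by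
      have := heuler
      unfold Nat.ModEq at this
      rw [this, Nat.mod_eq_of_lt h2]
    refine ⟨m ^ (Nat.totient n - 1), m ^ Nat.totient n / n, Nat.one_le_iff_ne_zero.2 (by positivity), ?_⟩
    have hpow : m ^ (Nat.totient n - 1) * m = m ^ Nat.totient n := by
      rw [← pow_succ]
      congr 1
      omega
    rw [hpow]
    have h5 := Nat.div_add_mod (m ^ Nat.totient n) n
    have h6 : m ^ Nat.totient n / n * n = n * (m ^ Nat.totient n / n) := Nat.mul_comm _ _
    omega

/-- Neighbouring safe states of the TA-SCL Markov chain are mutually accessible: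
if `s` and `s+1` are both safe states, then one can reach `s+1` from `s` and
`s` from `s+1` in finitely many steps with positive probability. -/
theorem tascl_safe_neighbors_accessible (βn βd ζ : ℕ) (hβd : 0 < βd) (hβ : βd < βn)
    (hcop : Nat.Coprime βn βd) (hζ : 0 < ζ) (ε : ℝ) (hε0 : 0 < ε) (hε1 : ε < 1)
    (s : ℕ) (hs1 : βd < s) (hs2 : s + 1 ≤ βn * ζ + βd)
    (h : s < βn * ζ + βn + 1) (h' : s + 1 < βn * ζ + βn + 1) :
    (∃ k : ℕ, 1 ≤ k ∧
      0 < (tasclP βn βd ζ ε ^ k) ⟨s, h⟩ ⟨s + 1, h'⟩) ∧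
    (∃ k' : ℕ, 1 ≤ k' ∧
      0 < (tasclP βn βd ζ ε ^ k') ⟨s + 1, h'⟩ ⟨s, h⟩) := by
  constructor
  · -- from s to s+1 : a up-moves and b - a down-moves, where a*βn = b*βd + 1
    obtain ⟨a, b, ha, hab⟩ := exists_mul_eq_mul_add_one (Nat.lt_of_lt_of_le hβd hβ.le) hβd hcop
    have hb1 : 1 ≤ b := by
      rcases Nat.eq_zero_or_pos b with rfl | hb
      · have h0 : (0 : ℕ) * βd = 0 := by ring
        rw [h0] at hab
        have h2 : βn ≤ a * βn := Nat.le_mul_of_pos_left _ ha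
        omega
      · exact hb
    have hab2 : a ≤ b := by
      have h1 : a * (βd + 1) ≤ a * βn := Nat.mul_le_mul_left a hβ
      have h2 : a * (βd + 1) = a * βd + a := by ring
      have h3 : a * βd ≤ b * βd := by omega
      exact Nat.le_of_mul_le_mul_right h3 hβd
    have hsum : a + (b - a) = b := by omega
    have hkey : (s + 1) + (a + (b - a)) * βd = s + a * βn := by
      rw [hsum]; omega
    have hpos := tasclP_climb (βn := βn) (βd := βd) (ζ := ζ) (ε := ε)
      hβd hβ hζ hε0 hε1 (b - 1) a (b - a) s (s + 1)
      (by omega) hs1 (by omega) (by omega) hs2 hkey h h'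
    exact ⟨b - 1 + 1, by omega, hpos⟩
  · -- from s+1 to s : b up-moves and a - b down-moves, where a*βd = b*βn + 1
    obtain ⟨a, b, ha, hab⟩ := exists_mul_eq_mul_add_one hβd
      (Nat.lt_of_lt_of_le hβd hβ.le) hcop.symm
    have hba : b < a := by
      have h1 : a * βd ≤ a * βn := Nat.mul_le_mul_left a hβ.le
      have h2 : b * βn < a * βn := by omega
      exact Nat.lt_of_mul_lt_mul_right h2
    have hsum : b + (a - b) = a := by omega
    have hkey : s + (b + (a - b)) * βd = (s + 1) + b * βn := by
      rw [hsum]; omega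
    have hpos := tasclP_climb (βn := βn) (βd := βd) (ζ := ζ) (ε := ε)
      hβd hβ hζ hε0 hε1 (a - 1) b (a - b) (s + 1) s
      (by omega) (by omega) hs2 hs1 (by omega) hkey h' h
    exact ⟨a - 1 + 1, by omega, hpos⟩
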